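/- For any m ∈ ℝ, B > 0 and t > 0, the Mullins grain-boundary-groove profile y₀ satisfies the boundary values ∂y₀/∂x(0,t) = m/2, ∂²y₀/∂x²(0,t) = −m/(2√2 (Bt)^{1/4} Γ(3/4)), and ∂³y₀/∂x³(0,t) = 0. -/

import Mathlib

/-- Pochhammer symbol (rising factorial) `(a)_k = a(a+1)⋯(a+k-1)`. -/
noncomputable def poch (a : ℝ) (k : ℕ) : ℝ := ∏ i ∈ Finset.range k, (a + (i : ℝ))

/-- Generalized hypergeometric function `₁F₃(a; b₁, b₂, b₃; z)`. -/
noncomputable def F13 (a b₁ b₂ b₃ z : ℝ) : ℝ :=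
  ∑' k : ℕ, poch a k / (poch b₁ k * poch b₂ k * poch b₃ k) * z ^ k / (Nat.factorial k)

/-- The Mullins grain-boundary-groove profile `y₀(x,t)`. -/
noncomputable def mullinsY (m B x t : ℝ) : ℝ :=
  m / 2 * x
  - m * x ^ 2 / (4 * Real.sqrt 2 * (B * t) ^ ((1:ℝ)/4) * Real.Gamma (3/4)) *
      F13 (1/4) (3/4) (5/4) (3/2) (x ^ 4 / (256 * B * t))
  - m * (B * t) ^ ((1:ℝ)/4) / (2 * Real.sqrt 2 * Real.Gamma (5/4)) *
      F13 (-1/4) (1/4) (1/2) (3/4) (x ^ 4 / (256 * B * t))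

namespace MullinsAux

open Filter

/-- Coefficients of the `₁F₃` power series. -/
noncomputable def coef (a b₁ b₂ b₃ : ℝ) (k : ℕ) : ℝ :=
  poch a k / (poch b₁ k * poch b₂ k * poch b₃ k * (Nat.factorial k : ℝ))

lemma poch_succ (a : ℝ) (k : ℕ) : poch a (k + 1) = poch a k * (a + k) :=
  Finset.prod_range_succ _ _

lemma poch_pos {b : ℝ} (hb : 0 < b) (k : ℕ) : 0 < poch b k :=
  Finset.prod_pos fun i _ => by positivity

lemma poch_ne_zero {a : ℝ} (ha : ∀ i : ℕ, a + i ≠ 0) (k : ℕ) : poch a k ≠ 0 :=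
  Finset.prod_ne_zero_iff.mpr fun i _ => ha i

variable {a b₁ b₂ b₃ : ℝ}

lemma coef_ne_zero (ha : ∀ i : ℕ, a + i ≠ 0) (h1 : 0 < b₁) (h2 : 0 < b₂) (h3 : 0 < b₃)
    (k : ℕ) : coef a b₁ b₂ b₃ k ≠ 0 := by
  have q1 := poch_pos h1 k
  have q2 := poch_pos h2 k
  have q3 := poch_pos h3 k
  have hf : (0:ℝ) < (Nat.factorial k : ℝ) := by exact_mod_cast k.factorial_pos
  exact div_ne_zero (poch_ne_zero ha k) (by positivity)

lemma coef_succ (h1 : 0 < b₁) (h2 : 0 < b₂) (h3 : 0 < b₃) (k : ℕ) :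
    coef a b₁ b₂ b₃ (k + 1)
      = coef a b₁ b₂ b₃ k * ((a + k) / ((b₁ + k) * (b₂ + k) * (b₃ + k) * ((k : ℝ) + 1))) := by
  have q1 : poch b₁ k ≠ 0 := (poch_pos h1 k).ne'
  have q2 : poch b₂ k ≠ 0 := (poch_pos h2 k).ne'
  have q3 : poch b₃ k ≠ 0 := (poch_pos h3 k).ne'
  have hb1 : b₁ + (k:ℝ) ≠ 0 := by positivity
  have hb2 : b₂ + (k:ℝ) ≠ 0 := by positivity
  have hb3 : b₃ + (k:ℝ) ≠ 0 := by positivity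
  have hk1 : ((k:ℝ) + 1) ≠ 0 := by positivity
  have hf : ((Nat.factorial k : ℕ) : ℝ) ≠ 0 := by
    exact_mod_cast k.factorial_ne_zero
  simp only [coef, poch_succ, Nat.factorial_succ]
  push_cast
  rw [div_mul_div_comm]
  congr 1
  ring

lemma ratio_tendsto (ha : ∀ i : ℕ, a + i ≠ 0) (h1 : 0 < b₁) (h2 : 0 < b₂) (h3 : 0 < b₃) :
    Tendsto (fun k : ℕ => ‖coef a b₁ b₂ b₃ (k + 1)‖ / ‖coef a b₁ b₂ b₃ k‖) atTop (nhds 0) := by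
  apply squeeze_zero' (g := fun k : ℕ => 2 / (k : ℝ))
  · exact Eventually.of_forall fun k => by positivity
  · have hev : ∀ᶠ k : ℕ in atTop, |a| ≤ (k:ℝ) ∧ 1 ≤ (k:ℝ) := by
      filter_upwards [Filter.eventually_ge_atTop (max 1 ⌈|a|⌉₊)] with k hk
      constructor
      · calc |a| ≤ (⌈|a|⌉₊ : ℝ) := Nat.le_ceil _
          _ ≤ k := by exact_mod_cast le_trans (le_max_right _ _) hk
      · exact_mod_cast le_trans (le_max_left _ _) hk
    filter_upwards [hev] with k hk
    obtain ⟨hka, hk1⟩ := hk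
    have hk0 : (0:ℝ) < k := lt_of_lt_of_le one_pos hk1
    have hcne : ‖coef a b₁ b₂ b₃ k‖ ≠ 0 :=
      norm_ne_zero_iff.mpr (coef_ne_zero ha h1 h2 h3 k)
    rw [coef_succ h1 h2 h3 k, norm_mul, mul_comm, mul_div_assoc, div_self hcne, mul_one,
      Real.norm_eq_abs, abs_div]
    have hD0 : (0:ℝ) < (b₁ + k) * (b₂ + k) * (b₃ + k) * ((k:ℝ) + 1) := by positivity
    rw [abs_of_pos hD0]
    have hnum : |a + (k:ℝ)| ≤ 2 * k := by
      calc |a + (k:ℝ)| ≤ |a| + |(k:ℝ)| := abs_add_le _ _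
        _ ≤ k + k := add_le_add hka (by rw [abs_of_pos hk0])
        _ = 2 * k := by ring
    have hden : (k:ℝ) * k ≤ (b₁ + k) * (b₂ + k) * (b₃ + k) * ((k:ℝ) + 1) := by
      calc (k:ℝ) * k = k * 1 * 1 * k := by ring
        _ ≤ (b₁ + k) * (b₂ + k) * (b₃ + k) * ((k:ℝ) + 1) := by gcongr <;> linarith
    calc |a + (k:ℝ)| / ((b₁ + k) * (b₂ + k) * (b₃ + k) * ((k:ℝ) + 1))
        ≤ (2 * k) / ((k:ℝ) * k) := div_le_div₀ (by positivity) hnum (by positivity) hden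
      _ = 2 / k := by rw [mul_div_mul_right _ _ hk0.ne']
  · exact tendsto_const_div_atTop_nhds_zero_nat 2

lemma radius_eq_top (ha : ∀ i : ℕ, a + i ≠ 0) (h1 : 0 < b₁) (h2 : 0 < b₂) (h3 : 0 < b₃) :
    (FormalMultilinearSeries.ofScalars ℝ (coef a b₁ b₂ b₃)).radius = ⊤ :=
  FormalMultilinearSeries.ofScalars_radius_eq_top_of_tendsto ℝ _
    (Eventually.of_forall (coef_ne_zero ha h1 h2 h3)) (ratio_tendsto ha h1 h2 h3)

lemma F13_eq_sum (a b₁ b₂ b₃ : ℝ) :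
    F13 a b₁ b₂ b₃ = (FormalMultilinearSeries.ofScalars ℝ (coef a b₁ b₂ b₃)).sum := by
  funext z
  simp only [F13]
  rw [show (FormalMultilinearSeries.ofScalars ℝ (coef a b₁ b₂ b₃)).sum z
      = FormalMultilinearSeries.ofScalarsSum (coef a b₁ b₂ b₃) z from rfl,
    FormalMultilinearSeries.ofScalars_sum_eq]
  refine tsum_congr fun k => ?_
  simp only [coef, smul_eq_mul]
  ring

lemma F13_zero (a b₁ b₂ b₃ : ℝ) : F13 a b₁ b₂ b₃ 0 = 1 := by
  simp only [F13]
  rw [tsum_eq_single 0]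
  · norm_num [poch]
  · intro k hk
    simp [zero_pow hk]

lemma F13_analytic (ha : ∀ i : ℕ, a + i ≠ 0) (h1 : 0 < b₁) (h2 : 0 < b₂) (h3 : 0 < b₃) :
    AnalyticOnNhd ℝ (F13 a b₁ b₂ b₃) Set.univ := by
  rw [F13_eq_sum]
  intro y _
  have hr : 0 < (FormalMultilinearSeries.ofScalars ℝ (coef a b₁ b₂ b₃)).radius := by
    rw [radius_eq_top ha h1 h2 h3]; exact ENNReal.zero_lt_top
  have h := ((FormalMultilinearSeries.ofScalars ℝ (coef a b₁ b₂ b₃)).hasFPowerSeriesOnBall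
    hr).analyticOnNhd
  apply h
  rw [EMetric.mem_ball, radius_eq_top ha h1 h2 h3]
  exact edist_lt_top y 0

lemma ici_deriv_eq (f : ℝ → ℝ) (h0 : Differentiable ℝ f) (h1 : Differentiable ℝ (deriv f))
    (h2 : DifferentiableAt ℝ (deriv (deriv f)) 0) :
    derivWithin f (Set.Ici 0) 0 = deriv f 0 ∧
    iteratedDerivWithin 2 f (Set.Ici 0) 0 = deriv (deriv f) 0 ∧
    iteratedDerivWithin 3 f (Set.Ici 0) 0 = deriv (deriv (deriv f)) 0 := by
  have hu : UniqueDiffOn ℝ (Set.Ici (0:ℝ)) := uniqueDiffOn_Ici 0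
  have h0m : (0:ℝ) ∈ Set.Ici (0:ℝ) := Set.self_mem_Ici
  have e1 : Set.EqOn (iteratedDerivWithin 1 f (Set.Ici 0)) (deriv f) (Set.Ici 0) := by
    intro x hx
    rw [iteratedDerivWithin_one]
    exact (h0 x).derivWithin (hu x hx)
  have e2 : Set.EqOn (iteratedDerivWithin 2 f (Set.Ici 0)) (deriv (deriv f)) (Set.Ici 0) := by
    intro x hx
    rw [show (2:ℕ) = 1 + 1 from rfl, iteratedDerivWithin_succ,
      derivWithin_congr e1 (e1 hx)]
    exact (h1 x).derivWithin (hu x hx)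
  refine ⟨(h0 0).derivWithin (hu 0 h0m), e2 h0m, ?_⟩
  rw [show (3:ℕ) = 2 + 1 from rfl, iteratedDerivWithin_succ,
    derivWithin_congr e2 (e2 h0m)]
  exact h2.derivWithin (hu 0 h0m)

end MullinsAux

open MullinsAux in
/-- Boundary values of the Mullins profile at `x = 0` (one-sided derivatives):
`∂y₀/∂x(0,t) = m/2`, `∂²y₀/∂x²(0,t) = -m/(2√2 (Bt)^{1/4} Γ(3/4))`, `∂³y₀/∂x³(0,t) = 0`. -/
theorem mullinsY_boundary_values (m B : ℝ) (hB : 0 < B) (t : ℝ) (ht : 0 < t) :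
    derivWithin (fun x : ℝ => mullinsY m B x t) (Set.Ici 0) 0 = m / 2 ∧
    iteratedDerivWithin 2 (fun x : ℝ => mullinsY m B x t) (Set.Ici 0) 0
      = -m / (2 * Real.sqrt 2 * (B * t) ^ ((1:ℝ)/4) * Real.Gamma (3/4)) ∧
    iteratedDerivWithin 3 (fun x : ℝ => mullinsY m B x t) (Set.Ici 0) 0 = 0 := by
  have hBt : 0 < B * t := mul_pos hB ht
  set c : ℝ := 256 * B * t with hcdef
  have hc : (0:ℝ) < c := by rw [hcdef]; positivity
  have hX : (0:ℝ) < (B * t) ^ ((1:ℝ)/4) := Real.rpow_pos_of_pos hBt _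
  have hs2 : (0:ℝ) < Real.sqrt 2 := Real.sqrt_pos.mpr (by norm_num)
  have hG34 : 0 < Real.Gamma (3/4) := Real.Gamma_pos_of_pos (by norm_num)
  have hG54 : 0 < Real.Gamma (5/4) := Real.Gamma_pos_of_pos (by norm_num)
  set C1 : ℝ := m / (4 * Real.sqrt 2 * (B * t) ^ ((1:ℝ)/4) * Real.Gamma (3/4)) with hC1
  set C2 : ℝ := m * (B * t) ^ ((1:ℝ)/4) / (2 * Real.sqrt 2 * Real.Gamma (5/4)) with hC2
  set g1 : ℝ → ℝ := F13 (1/4) (3/4) (5/4) (3/2) with hg1def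
  set g2 : ℝ → ℝ := F13 (-1/4) (1/4) (1/2) (3/4) with hg2def
  have ha1 : ∀ i : ℕ, (1/4 : ℝ) + i ≠ 0 := fun i => by positivity
  have ha2 : ∀ i : ℕ, (-1/4 : ℝ) + i ≠ 0 := by
    intro i
    cases i with
    | zero => norm_num
    | succ n =>
      have hn : (0:ℝ) ≤ n := Nat.cast_nonneg n
      have : (0:ℝ) < -1/4 + ((n + 1 : ℕ) : ℝ) := by push_cast; linarith
      exact this.ne'
  have Ag1 : AnalyticOnNhd ℝ g1 Set.univ := by
    rw [hg1def]; exact F13_analytic ha1 (by norm_num) (by norm_num) (by norm_num)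
  have Ag2 : AnalyticOnNhd ℝ g2 Set.univ := by
    rw [hg2def]; exact F13_analytic ha2 (by norm_num) (by norm_num) (by norm_num)
  have Dg1 : ∀ x, DifferentiableAt ℝ g1 x := fun x => (Ag1 x (Set.mem_univ x)).differentiableAt
  have Dg2 : ∀ x, DifferentiableAt ℝ g2 x := fun x => (Ag2 x (Set.mem_univ x)).differentiableAt
  have Dd1 : ∀ x, DifferentiableAt ℝ (deriv g1) x :=
    fun x => (Ag1.deriv x (Set.mem_univ x)).differentiableAt
  have Dd2 : ∀ x, DifferentiableAt ℝ (deriv g2) x :=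
    fun x => (Ag2.deriv x (Set.mem_univ x)).differentiableAt
  have De1 : ∀ x, DifferentiableAt ℝ (deriv (deriv g1)) x :=
    fun x => (Ag1.deriv.deriv x (Set.mem_univ x)).differentiableAt
  have De2 : ∀ x, DifferentiableAt ℝ (deriv (deriv g2)) x :=
    fun x => (Ag2.deriv.deriv x (Set.mem_univ x)).differentiableAt
  have hone : g1 0 = 1 := by rw [hg1def]; exact F13_zero _ _ _ _
  -- derivatives of the inner functions
  have hv : ∀ x : ℝ, HasDerivAt (fun y : ℝ => y ^ 4 / c) (4 * x ^ 3 / c) x := by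
    intro x
    have h := (hasDerivAt_pow 4 x).div_const c
    convert h using 1
    all_goals try with_reducible_and_instances rfl
    try push_cast [Nat.reduceSub]
    try ring
  have hw : ∀ x : ℝ, HasDerivAt (fun y : ℝ => 4 * y ^ 3 / c) (12 * x ^ 2 / c) x := by
    intro x
    have h := ((hasDerivAt_pow 3 x).const_mul (4:ℝ)).div_const c
    convert h using 1
    all_goals try with_reducible_and_instances rfl
    try push_cast [Nat.reduceSub]
    try ring
  have hcg1 : ∀ x : ℝ, HasDerivAt (fun y : ℝ => g1 (y ^ 4 / c))
      (deriv g1 (x ^ 4 / c) * (4 * x ^ 3 / c)) x :=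
    fun x => (hasDerivAt_deriv_iff.mpr (Dg1 _)).comp x (hv x)
  have hcg2 : ∀ x : ℝ, HasDerivAt (fun y : ℝ => g2 (y ^ 4 / c))
      (deriv g2 (x ^ 4 / c) * (4 * x ^ 3 / c)) x :=
    fun x => (hasDerivAt_deriv_iff.mpr (Dg2 _)).comp x (hv x)
  have hcd1 : ∀ x : ℝ, HasDerivAt (fun y : ℝ => deriv g1 (y ^ 4 / c))
      (deriv (deriv g1) (x ^ 4 / c) * (4 * x ^ 3 / c)) x :=
    fun x => (hasDerivAt_deriv_iff.mpr (Dd1 _)).comp x (hv x)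
  have hcd2 : ∀ x : ℝ, HasDerivAt (fun y : ℝ => deriv g2 (y ^ 4 / c))
      (deriv (deriv g2) (x ^ 4 / c) * (4 * x ^ 3 / c)) x :=
    fun x => (hasDerivAt_deriv_iff.mpr (Dd2 _)).comp x (hv x)
  have hce1 : ∀ x : ℝ, HasDerivAt (fun y : ℝ => deriv (deriv g1) (y ^ 4 / c))
      (deriv (deriv (deriv g1)) (x ^ 4 / c) * (4 * x ^ 3 / c)) x :=
    fun x => (hasDerivAt_deriv_iff.mpr (De1 _)).comp x (hv x)
  have hce2 : ∀ x : ℝ, HasDerivAt (fun y : ℝ => deriv (deriv g2) (y ^ 4 / c))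
      (deriv (deriv (deriv g2)) (x ^ 4 / c) * (4 * x ^ 3 / c)) x :=
    fun x => (hasDerivAt_deriv_iff.mpr (De2 _)).comp x (hv x)
  -- rewrite the profile in a clean form
  have hFeq : (fun x : ℝ => mullinsY m B x t)
      = fun x : ℝ => m / 2 * x - C1 * (x ^ 2 * g1 (x ^ 4 / c)) - C2 * g2 (x ^ 4 / c) := by
    funext x
    rw [hC1, hC2, hg1def, hg2def, hcdef]
    simp only [mullinsY]
    ring
  rw [hFeq]
  -- first derivative
  have hG : ∀ x : ℝ, HasDerivAt
      (fun x : ℝ => m / 2 * x - C1 * (x ^ 2 * g1 (x ^ 4 / c)) - C2 * g2 (x ^ 4 / c))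
      (m / 2 - 2 * C1 * (x * g1 (x ^ 4 / c)) - 4 * C1 / c * (x ^ 5 * deriv g1 (x ^ 4 / c))
        - 4 * C2 / c * (x ^ 3 * deriv g2 (x ^ 4 / c))) x := by
    intro x
    have h := (((hasDerivAt_id' (x := x)).const_mul (m/2)).sub
        (((hasDerivAt_pow 2 x).mul (hcg1 x)).const_mul C1)).sub ((hcg2 x).const_mul C2)
    convert h using 1
    all_goals try with_reducible_and_instances rfl
    try push_cast [Nat.reduceSub]
    try ring
  have hderivG : deriv (fun x : ℝ => m / 2 * x - C1 * (x ^ 2 * g1 (x ^ 4 / c))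
        - C2 * g2 (x ^ 4 / c))
      = fun x : ℝ => m / 2 - 2 * C1 * (x * g1 (x ^ 4 / c))
        - 4 * C1 / c * (x ^ 5 * deriv g1 (x ^ 4 / c))
        - 4 * C2 / c * (x ^ 3 * deriv g2 (x ^ 4 / c)) :=
    funext fun x => (hG x).deriv
  -- second derivative
  have hH : ∀ x : ℝ, HasDerivAt
      (fun x : ℝ => m / 2 - 2 * C1 * (x * g1 (x ^ 4 / c))
        - 4 * C1 / c * (x ^ 5 * deriv g1 (x ^ 4 / c))
        - 4 * C2 / c * (x ^ 3 * deriv g2 (x ^ 4 / c)))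
      (-(2 * C1) * (g1 (x ^ 4 / c) + x * (deriv g1 (x ^ 4 / c) * (4 * x ^ 3 / c)))
        - 4 * C1 / c * (5 * x ^ 4 * deriv g1 (x ^ 4 / c)
            + x ^ 5 * (deriv (deriv g1) (x ^ 4 / c) * (4 * x ^ 3 / c)))
        - 4 * C2 / c * (3 * x ^ 2 * deriv g2 (x ^ 4 / c)
            + x ^ 3 * (deriv (deriv g2) (x ^ 4 / c) * (4 * x ^ 3 / c)))) x := by
    intro x
    have h := (((hasDerivAt_const x (m/2)).sub
        (((hasDerivAt_id' (x := x)).mul (hcg1 x)).const_mul (2 * C1))).sub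
        (((hasDerivAt_pow 5 x).mul (hcd1 x)).const_mul (4 * C1 / c))).sub
        (((hasDerivAt_pow 3 x).mul (hcd2 x)).const_mul (4 * C2 / c))
    convert h using 1
    all_goals try with_reducible_and_instances rfl
    try push_cast [Nat.reduceSub]
    try ring
  have hderivH : deriv (fun x : ℝ => m / 2 - 2 * C1 * (x * g1 (x ^ 4 / c))
        - 4 * C1 / c * (x ^ 5 * deriv g1 (x ^ 4 / c))
        - 4 * C2 / c * (x ^ 3 * deriv g2 (x ^ 4 / c)))
      = fun x : ℝ => -(2 * C1) * (g1 (x ^ 4 / c) + x * (deriv g1 (x ^ 4 / c) * (4 * x ^ 3 / c)))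
        - 4 * C1 / c * (5 * x ^ 4 * deriv g1 (x ^ 4 / c)
            + x ^ 5 * (deriv (deriv g1) (x ^ 4 / c) * (4 * x ^ 3 / c)))
        - 4 * C2 / c * (3 * x ^ 2 * deriv g2 (x ^ 4 / c)
            + x ^ 3 * (deriv (deriv g2) (x ^ 4 / c) * (4 * x ^ 3 / c))) :=
    funext fun x => (hH x).deriv
  -- third derivative at zero
  have hH1 : HasDerivAt
      (fun x : ℝ => -(2 * C1) * (g1 (x ^ 4 / c) + x * (deriv g1 (x ^ 4 / c) * (4 * x ^ 3 / c)))
        - 4 * C1 / c * (5 * x ^ 4 * deriv g1 (x ^ 4 / c)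
            + x ^ 5 * (deriv (deriv g1) (x ^ 4 / c) * (4 * x ^ 3 / c)))
        - 4 * C2 / c * (3 * x ^ 2 * deriv g2 (x ^ 4 / c)
            + x ^ 3 * (deriv (deriv g2) (x ^ 4 / c) * (4 * x ^ 3 / c)))) 0 0 := by
    have hA := (hcg1 0).add ((hasDerivAt_id' (x := (0:ℝ))).mul ((hcd1 0).mul (hw 0)))
    have hB' := (((hasDerivAt_pow 4 0).const_mul (5:ℝ)).mul (hcd1 0)).add
        ((hasDerivAt_pow 5 0).mul ((hce1 0).mul (hw 0)))
    have hC' := (((hasDerivAt_pow 2 0).const_mul (3:ℝ)).mul (hcd2 0)).add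
        ((hasDerivAt_pow 3 0).mul ((hce2 0).mul (hw 0)))
    have h := ((hA.const_mul (-(2 * C1))).sub (hB'.const_mul (4 * C1 / c))).sub
        (hC'.const_mul (4 * C2 / c))
    convert h using 1
    all_goals try with_reducible_and_instances rfl
    try norm_num
  -- assemble
  have hd0 : Differentiable ℝ
      (fun x : ℝ => m / 2 * x - C1 * (x ^ 2 * g1 (x ^ 4 / c)) - C2 * g2 (x ^ 4 / c)) :=
    fun x => (hG x).differentiableAt
  have hd1 : Differentiable ℝ (deriv
      (fun x : ℝ => m / 2 * x - C1 * (x ^ 2 * g1 (x ^ 4 / c)) - C2 * g2 (x ^ 4 / c))) := by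
    rw [hderivG]; exact fun x => (hH x).differentiableAt
  have hd2 : DifferentiableAt ℝ (deriv (deriv
      (fun x : ℝ => m / 2 * x - C1 * (x ^ 2 * g1 (x ^ 4 / c)) - C2 * g2 (x ^ 4 / c)))) 0 := by
    rw [hderivG, hderivH]; exact hH1.differentiableAt
  obtain ⟨q1, q2, q3⟩ := ici_deriv_eq _ hd0 hd1 hd2
  refine ⟨?_, ?_, ?_⟩
  · rw [q1, hderivG]
    norm_num
  · rw [q2, hderivG, hderivH]
    norm_num [hone]
    rw [hC1]
    field_simp
    ring
  · rw [q3, hderivG, hderivH, hH1.deriv]
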